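/- The cartesian product of finitely many quasi-Frank-and-Wolfe sets is a quasi-Frank-and-Wolfe set. -/

import Mathlib

open Pointwise
set_option linter.unusedSectionVars false
set_option maxHeartbeats 1000000

noncomputable section

/-- A quadratic function on a real vector space. -/
def IsQuadratic {E : Type*} [AddCommGroup E] [Module ℝ E] (f : E → ℝ) : Prop :=
  ∃ (B : E →ₗ[ℝ] E →ₗ[ℝ] ℝ) (l : E →ₗ[ℝ] ℝ) (c : ℝ), ∀ x, f x = B x x + l x + c

/-- A quasi-Frank-and-Wolfe set: a convex set on which every quadratic function
which is quasi-convex on the set and bounded below attains its infimum. -/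
def IsQFWSet {E : Type*} [AddCommGroup E] [Module ℝ E] (F : Set E) : Prop :=
  Convex ℝ F ∧ ∀ f : E → ℝ, IsQuadratic f →
    (∀ α : ℝ, Convex ℝ {x ∈ F | f x ≤ α}) → BddBelow (f '' F) →
    ∃ x₀ ∈ F, ∀ x ∈ F, f x₀ ≤ f x

namespace QFWProd

open Filter Topology RealInnerProductSpace Module

variable {E : Type} [NormedAddCommGroup E] [InnerProductSpace ℝ E] [FiniteDimensional ℝ E]

/-- All linear images (into finite-dimensional real inner product spaces) are closed. -/
def AIC (C : Set E) : Prop :=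
  ∀ (F : Type) [NormedAddCommGroup F] [InnerProductSpace ℝ F] [FiniteDimensional ℝ F]
    (L : E →ₗ[ℝ] F), IsClosed (L '' C)

lemma AIC.isClosed {C : Set E} (h : AIC C) : IsClosed C := by
  have := h E LinearMap.id
  simpa using this

lemma AIC.image {F : Type} [NormedAddCommGroup F] [InnerProductSpace ℝ F]
    [FiniteDimensional ℝ F] {C : Set E} (h : AIC C) (L : E →ₗ[ℝ] F) : AIC (⇑L '' C) := by
  intro G _ _ _ M
  have : ⇑M '' (⇑L '' C) = ⇑(M ∘ₗ L) '' C := by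
    rw [Set.image_image]; rfl
  rw [this]
  exact h G (M ∘ₗ L)

lemma AIC.inter_hyperplane {C : Set E} (h : AIC C) (φ : E →ₗ[ℝ] ℝ) (r : ℝ) :
    AIC (C ∩ {z | φ z = r}) := by
  intro G _ _ _ M
  set e : WithLp 2 (G × ℝ) ≃L[ℝ] G × ℝ := WithLp.prodContinuousLinearEquiv 2 ℝ G ℝ
  set L' : E →ₗ[ℝ] WithLp 2 (G × ℝ) := (e.symm : G × ℝ →L[ℝ] WithLp 2 (G × ℝ)).toLinearMap ∘ₗ (M.prod φ)
  have hcl : IsClosed (⇑L' '' C) := h _ L'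
  apply isClosed_of_closure_subset
  intro w hw
  rcases mem_closure_iff_seq_limit.1 hw with ⟨x, hx, hlim⟩
  choose z hzC hzr hMz using fun n => (by
    rcases hx n with ⟨z, ⟨hz1, hz2⟩, hz3⟩
    exact ⟨z, hz1, hz2, hz3⟩ : ∃ z, z ∈ C ∧ φ z = r ∧ M z = x n)
  have hL'z : ∀ n, L' (z n) = e.symm (x n, r) := by
    intro n
    show e.symm (M (z n), φ (z n)) = e.symm (x n, r)
    rw [hMz, hzr]
  have hlim' : Tendsto (fun n => L' (z n)) atTop (𝓝 (e.symm (w, r))) := by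
    simp only [hL'z]
    exact (e.symm.continuous.tendsto _).comp (hlim.prodMk_nhds tendsto_const_nhds)
  have hmem : e.symm (w, r) ∈ ⇑L' '' C :=
    hcl.mem_of_tendsto hlim' (Filter.Eventually.of_forall fun n => ⟨z n, hzC n, rfl⟩)
  rcases hmem with ⟨z₀, hz₀, hz₀'⟩
  have : (M z₀, φ z₀) = (w, r) := by
    have := congrArg e hz₀'
    simpa [L'] using this
  refine ⟨z₀, ⟨hz₀, ?_⟩, ?_⟩
  · exact (Prod.ext_iff.1 this).2
  · exact (Prod.ext_iff.1 this).1


/-- From an unbounded sequence extract a subsequence with norms tending to infinity and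
normalized vectors converging to a unit vector. -/
lemma exists_escape_dir (z : ℕ → E) (hunb : ∀ R : ℝ, ∃ k, R < ‖z k‖) :
    ∃ (u : E) (φ : ℕ → ℕ), StrictMono φ ∧ ‖u‖ = 1 ∧
      Tendsto (fun k => ‖z (φ k)‖) atTop atTop ∧
      Tendsto (fun k => ‖z (φ k)‖⁻¹ • z (φ k)) atTop (𝓝 u) := by
  have key : ∀ (N : ℕ) (R : ℝ), ∃ k, N < k ∧ R < ‖z k‖ := by
    intro N R
    set M : ℝ := (Finset.range (N + 1)).sup' (by simp) (fun i => ‖z i‖) with hM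
    rcases hunb (max M R) with ⟨k, hk⟩
    refine ⟨k, ?_, lt_of_le_of_lt (le_max_right _ _) hk⟩
    by_contra hle
    push_neg at hle
    have : ‖z k‖ ≤ M := Finset.le_sup' (fun i => ‖z i‖) (by simp [Nat.lt_succ_iff, hle])
    exact absurd (lt_of_le_of_lt (le_max_left M R) hk) (not_lt.2 this)
  -- build subsequence
  have hex : ∃ ψ : ℕ → ℕ, StrictMono ψ ∧ ∀ n : ℕ, (n : ℝ) < ‖z (ψ n)‖ := by
    choose g hg1 hg2 using key
    refine ⟨fun n => Nat.rec (g 0 0) (fun n p => g p (n + 1)) n,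
      strictMono_nat_of_lt_succ fun n => hg1 _ _, ?_⟩
    intro n
    cases n with
    | zero => simpa using hg2 0 (0 : ℝ)
    | succ m => simpa using hg2 _ ((m : ℝ) + 1)
  rcases hex with ⟨ψ, hψmono, hψ⟩
  have hpos : ∀ n, 0 < ‖z (ψ n)‖ := fun n => lt_of_le_of_lt (Nat.cast_nonneg n) (hψ n)
  have hsphere : ∀ n, (‖z (ψ n)‖⁻¹ • z (ψ n)) ∈ Metric.sphere (0 : E) 1 := by
    intro n
    simp [norm_smul, abs_of_pos (inv_pos.2 (hpos n)), inv_mul_cancel₀ (ne_of_gt (hpos n))]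
  obtain ⟨u, hu, θ, hθmono, hθlim⟩ :=
    (isCompact_sphere (0 : E) 1).tendsto_subseq hsphere
  have hnorm : Tendsto (fun k => ‖z (ψ k)‖) atTop atTop :=
    tendsto_atTop_mono (fun n => le_of_lt (hψ n)) tendsto_natCast_atTop_atTop
  refine ⟨u, ψ ∘ θ, hψmono.comp hθmono, by simpa using hu, ?_, ?_⟩
  · exact hnorm.comp hθmono.tendsto_atTop
  · exact hθlim

/-- Recession lemma: escape directions are recession directions of closed convex sets. -/
lemma recession_of_escape {C : Set E} (hC : IsClosed C) (hconv : Convex ℝ C)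
    {z : ℕ → E} {u : E}
    (hz : ∀ᶠ k in atTop, z k ∈ C)
    (hn : Tendsto (fun k => ‖z k‖) atTop atTop)
    (hd : Tendsto (fun k => ‖z k‖⁻¹ • z k) atTop (𝓝 u)) :
    ∀ c ∈ C, ∀ t : ℝ, 0 ≤ t → c + t • u ∈ C := by
  intro c hc t ht
  have hev : ∀ᶠ k in atTop, (1 - t * ‖z k‖⁻¹) • c + (t * ‖z k‖⁻¹) • z k ∈ C := by
    have h1 : ∀ᶠ k in atTop, t ≤ ‖z k‖ := hn.eventually_ge_atTop t
    have h0 : ∀ᶠ k in atTop, (0:ℝ) < ‖z k‖ := hn.eventually_gt_atTop 0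
    filter_upwards [hz, h1, h0] with k hk h1k h0k
    have hl0 : 0 ≤ t * ‖z k‖⁻¹ := mul_nonneg ht (inv_nonneg.2 (le_of_lt h0k))
    have hl1 : t * ‖z k‖⁻¹ ≤ 1 := by
      rw [mul_inv_le_iff₀ h0k]; simpa using h1k
    exact hconv hc hk (by linarith) hl0 (by ring)
  have hinv : Tendsto (fun k => ‖z k‖⁻¹) atTop (𝓝 0) := hn.inv_tendsto_atTop
  have hlim : Tendsto (fun k => (1 - t * ‖z k‖⁻¹) • c + (t * ‖z k‖⁻¹) • z k)
      atTop (𝓝 (c + t • u)) := by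
    have e1 : Tendsto (fun k => (t * ‖z k‖⁻¹)) atTop (𝓝 0) := by
      simpa using hinv.const_mul t
    have e2 : Tendsto (fun k => (1 - t * ‖z k‖⁻¹) • c) atTop (𝓝 c) := by
      have h1 : Tendsto (fun _ : ℕ => (1:ℝ)) atTop (𝓝 1) := tendsto_const_nhds
      have hc' : Tendsto (fun _ : ℕ => c) atTop (𝓝 c) := tendsto_const_nhds
      simpa using (h1.sub e1).smul hc'
    have e3 : Tendsto (fun k => (t * ‖z k‖⁻¹) • z k) atTop (𝓝 (t • u)) := by
      have : (fun k => (t * ‖z k‖⁻¹) • z k) = fun k => t • (‖z k‖⁻¹ • z k) := by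
        funext k; rw [mul_smul]
      rw [this]
      exact hd.const_smul t
    simpa using e2.add e3
  exact hC.mem_of_tendsto hlim hev

/-- A quadratic polynomial bounded on `[0,∞)` has vanishing linear & quadratic coefficients. -/
lemma poly_coeffs_zero {c₂ c₁ c₀ μ α : ℝ}
    (h : ∀ t : ℝ, 0 ≤ t → μ ≤ c₂ * t ^ 2 + c₁ * t + c₀ ∧ c₂ * t ^ 2 + c₁ * t + c₀ ≤ α) :
    c₂ = 0 ∧ c₁ = 0 := by
  have h0 := h 0 le_rfl
  have hc2 : c₂ = 0 := by
    rcases lt_trichotomy c₂ 0 with hneg | hz | hpos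
    · exfalso
      set t : ℝ := max 1 ((|c₁| + c₀ - μ + 1) / (-c₂)) with ht
      have ht1 : (1:ℝ) ≤ t := le_max_left _ _
      have ht0 : 0 ≤ t := by linarith
      have ht2 : (|c₁| + c₀ - μ + 1) / (-c₂) ≤ t := le_max_right _ _
      have hkey : (|c₁| + c₀ - μ + 1) ≤ t * (-c₂) := by
        rw [div_le_iff₀ (by linarith)] at ht2; linarith [ht2]
      have := (h t ht0).1
      have habs : c₁ * t ≤ |c₁| * t := by
        have := le_abs_self c₁
        nlinarith
      nlinarith [sq_nonneg t, mul_le_mul_of_nonneg_left ht1 (le_of_lt (neg_pos.2 hneg))]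
    · exact hz
    · exfalso
      set t : ℝ := max 1 ((|c₁| + α - c₀ + 1) / c₂) with ht
      have ht1 : (1:ℝ) ≤ t := le_max_left _ _
      have ht0 : 0 ≤ t := by linarith
      have ht2 : (|c₁| + α - c₀ + 1) / c₂ ≤ t := le_max_right _ _
      have hkey : (|c₁| + α - c₀ + 1) ≤ t * c₂ := by
        rw [div_le_iff₀ hpos] at ht2; linarith [ht2]
      have := (h t ht0).2
      have habs : -(|c₁| * t) ≤ c₁ * t := by
        have := neg_abs_le c₁
        nlinarith
      nlinarith [sq_nonneg t]
  subst hc2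
  constructor
  · rfl
  rcases lt_trichotomy c₁ 0 with hneg | hz | hpos
  · exfalso
    have hc0 : μ ≤ c₀ := by nlinarith [h0.1]
    set t : ℝ := (c₀ - μ + 1) / (-c₁) with ht
    have htnn : 0 ≤ t := div_nonneg (by linarith) (by linarith)
    have hne : c₁ ≠ 0 := ne_of_lt hneg
    have hct : c₁ * t = -(c₀ - μ + 1) := by
      rw [ht]; field_simp
    have := (h t htnn).1
    nlinarith [this]
  · exact hz
  · exfalso
    have hc0 : c₀ ≤ α := by nlinarith [h0.2]
    set t : ℝ := (α - c₀ + 1) / c₁ with ht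
    have htnn : 0 ≤ t := div_nonneg (by linarith) (by linarith)
    have hne : c₁ ≠ 0 := ne_of_gt hpos
    have hct : c₁ * t = α - c₀ + 1 := by
      rw [ht]; field_simp
    have := (h t htnn).2
    nlinarith [this]


lemma quad_expand (B : E →ₗ[ℝ] E →ₗ[ℝ] ℝ) (l : E →ₗ[ℝ] ℝ) (c : ℝ) (z u : E) (t : ℝ) :
    B (z + t • u) (z + t • u) + l (z + t • u) + c
      = (B z z + l z + c) + t * (B z u + B u z + l u) + t ^ 2 * (B u u) := by
  simp only [map_add, map_smul, LinearMap.add_apply, LinearMap.smul_apply, smul_eq_mul]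
  ring

lemma quad_continuous (B : E →ₗ[ℝ] E →ₗ[ℝ] ℝ) (l : E →ₗ[ℝ] ℝ) (c : ℝ) :
    Continuous fun z : E => B z z + l z + c := by
  have hB : Continuous fun z : E => (B z) z := by
    let Bc : E →ₗ[ℝ] (E →L[ℝ] ℝ) :=
      { toFun := fun z => LinearMap.toContinuousLinearMap (B z)
        map_add' := by intro x y; ext v; simp
        map_smul' := by intro r x; ext v; simp }
    have hBc : Continuous Bc := Bc.continuous_of_finiteDimensional
    have hpair : Continuous fun z : E => ((Bc z : E →L[ℝ] ℝ), z) := hBc.prodMk continuous_id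
    have := isBoundedBilinearMap_apply.continuous.comp hpair
    exact this
  exact (hB.add l.continuous_of_finiteDimensional).add continuous_const

/-- The key Minkowski-sum closedness lemma, by induction on dimension. -/
lemma sum_closed : ∀ (n : ℕ) (E : Type) [NormedAddCommGroup E] [InnerProductSpace ℝ E]
    [FiniteDimensional ℝ E] (W : Submodule ℝ E), finrank ℝ W ≤ n →
    ∀ C₁ C₂ : Set E, C₁ ⊆ (W : Set E) → C₂ ⊆ (W : Set E) → Convex ℝ C₁ → Convex ℝ C₂ →
    AIC C₁ → AIC C₂ → IsClosed (C₁ + C₂) := by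
  intro n
  induction n with
  | zero =>
    intro E _ _ _ W hW C₁ C₂ h1 h2 _ _ _ _
    have hbot : W = ⊥ := Submodule.finrank_eq_zero.1 (Nat.le_zero.1 hW)
    subst hbot
    have hsub : C₁ + C₂ ⊆ {0} := by
      rintro a ⟨x, hx, y, hy, rfl⟩
      have hx0 : x = 0 := by simpa using h1 hx
      have hy0 : y = 0 := by simpa using h2 hy
      simp [hx0, hy0]
    exact (Set.Finite.subset (Set.finite_singleton 0) hsub).isClosed
  | succ n IH =>
    intro E _ _ _ W hW C₁ C₂ hC1W hC2W hconv1 hconv2 hA1 hA2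
    apply isClosed_of_closure_subset
    intro w hw
    rcases mem_closure_iff_seq_limit.1 hw with ⟨s, hs, hslim⟩
    choose x hx y hy hxy using fun k => Set.mem_add.1 (hs k)
    by_cases hbdd : ∃ R, ∀ k, ‖x k‖ ≤ R
    · -- bounded case
      rcases hbdd with ⟨R, hR⟩
      obtain ⟨xb, _, φ, hφ, hxlim⟩ := (isCompact_closedBall (0:E) R).tendsto_subseq
        (x := x) (fun k => by simpa [Metric.mem_closedBall, dist_eq_norm] using hR k)
      have hxb : xb ∈ C₁ :=
        hA1.isClosed.mem_of_tendsto hxlim (Filter.Eventually.of_forall fun k => hx (φ k))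
      have hylim : Tendsto (fun k => y (φ k)) atTop (𝓝 (w - xb)) := by
        have : (fun k => y (φ k)) = fun k => s (φ k) - x (φ k) := by
          funext k; rw [← hxy (φ k)]; abel
        rw [this]
        exact (hslim.comp hφ.tendsto_atTop).sub hxlim
      have hyb : w - xb ∈ C₂ :=
        hA2.isClosed.mem_of_tendsto hylim (Filter.Eventually.of_forall fun k => hy (φ k))
      exact ⟨xb, hxb, w - xb, hyb, by module⟩
    · -- unbounded case
      push_neg at hbdd
      obtain ⟨u, φ, hφmono, hu1, hnorm, hdir⟩ := exists_escape_dir x hbdd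
      have hxφ : ∀ k, x (φ k) ∈ C₁ := fun k => hx (φ k)
      have hrec1 : ∀ c ∈ C₁, ∀ t : ℝ, 0 ≤ t → c + t • u ∈ C₁ :=
        recession_of_escape hA1.isClosed hconv1 (Filter.Eventually.of_forall hxφ) hnorm hdir
      -- analysis of the y-side
      have hslimφ : Tendsto (fun k => s (φ k)) atTop (𝓝 w) := hslim.comp hφmono.tendsto_atTop
      have hcinv : Tendsto (fun k => ‖x (φ k)‖⁻¹) atTop (𝓝 0) := hnorm.inv_tendsto_atTop
      have hAlim : Tendsto (fun k => ‖x (φ k)‖⁻¹ • y (φ k)) atTop (𝓝 (-u)) := by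
        have heq : (fun k => ‖x (φ k)‖⁻¹ • y (φ k))
            = fun k => ‖x (φ k)‖⁻¹ • s (φ k) - ‖x (φ k)‖⁻¹ • x (φ k) := by
          funext k; rw [← smul_sub]; congr 1; rw [← hxy (φ k)]; abel
        rw [heq]
        have t1 : Tendsto (fun k => ‖x (φ k)‖⁻¹ • s (φ k)) atTop (𝓝 ((0:ℝ) • w)) :=
          hcinv.smul hslimφ
        have := t1.sub hdir
        simpa using this
      have hAnorm : Tendsto (fun k => ‖‖x (φ k)‖⁻¹ • y (φ k)‖) atTop (𝓝 1) := by
        have := hAlim.norm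
        simpa [hu1] using this
      have hev : ∀ᶠ k in atTop, (0:ℝ) < ‖x (φ k)‖ := hnorm.eventually_gt_atTop 0
      have hynormeq : ∀ᶠ k in atTop,
          ‖y (φ k)‖ = ‖x (φ k)‖ * ‖‖x (φ k)‖⁻¹ • y (φ k)‖ := by
        filter_upwards [hev] with k hk
        rw [norm_smul, norm_inv, norm_norm]
        field_simp
      have hynorm : Tendsto (fun k => ‖y (φ k)‖) atTop atTop :=
        Tendsto.congr' (Filter.EventuallyEq.symm hynormeq) (hnorm.atTop_mul_pos one_pos hAnorm)
      have hydir : Tendsto (fun k => ‖y (φ k)‖⁻¹ • y (φ k)) atTop (𝓝 (-u)) := by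
        have h2 : Tendsto (fun k => ‖‖x (φ k)‖⁻¹ • y (φ k)‖⁻¹ • (‖x (φ k)‖⁻¹ • y (φ k)))
            atTop (𝓝 ((1:ℝ)⁻¹ • (-u))) := (hAnorm.inv₀ one_ne_zero).smul hAlim
        have heq : ∀ᶠ k in atTop, ‖‖x (φ k)‖⁻¹ • y (φ k)‖⁻¹ • (‖x (φ k)‖⁻¹ • y (φ k))
            = ‖y (φ k)‖⁻¹ • y (φ k) := by
          filter_upwards [hev] with k hk
          rw [norm_smul, norm_inv, norm_norm, mul_inv, inv_inv, ← smul_assoc, smul_eq_mul]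
          by_cases hy0 : ‖y (φ k)‖ = 0
          · simp [hy0]
          · congr 1
            field_simp
        have := Tendsto.congr' heq h2
        simpa using this
      have hrec2 : ∀ c ∈ C₂, ∀ t : ℝ, 0 ≤ t → c + t • (-u) ∈ C₂ :=
        recession_of_escape hA2.isClosed hconv2
          (Filter.Eventually.of_forall fun k => hy (φ k)) hynorm hydir
      -- u ∈ W
      have hWclosed : IsClosed (W : Set E) := Submodule.closed_of_finiteDimensional W
      have huW : u ∈ W := by
        have : ∀ k, ‖x (φ k)‖⁻¹ • x (φ k) ∈ (W : Set E) :=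
          fun k => W.smul_mem _ (hC1W (hxφ k))
        exact hWclosed.mem_of_tendsto hdir (Filter.Eventually.of_forall this)
      -- the projection along u
      set feu : E →ₗ[ℝ] ℝ := (innerSL ℝ u).toLinearMap with hfeu
      set piu : E →ₗ[ℝ] E := LinearMap.id - feu.smulRight u with hpiu
      have hpiu_apply : ∀ z : E, piu z = z - (⟪u, z⟫) • u := fun z => rfl
      set W' : Submodule ℝ E := W ⊓ LinearMap.ker feu with hW'
      have hpiW : ∀ z ∈ W, piu z ∈ W' := by
        intro z hz
        refine ⟨W.sub_mem hz (W.smul_mem _ huW), ?_⟩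
        have : ⟪u, z - (⟪u, z⟫) • u⟫ = 0 := by
          rw [inner_sub_right, real_inner_smul_right, real_inner_self_eq_norm_sq, hu1]
          ring
        simpa [feu, LinearMap.mem_ker, hpiu_apply] using this
      have hW'lt : W' < W := by
        refine lt_of_le_of_ne inf_le_left ?_
        intro hcontra
        have : u ∈ W' := hcontra ▸ huW
        have h0 : feu u = 0 := this.2
        have h1 : feu u = 1 := by
          simp only [feu, ContinuousLinearMap.coe_coe, innerSL_apply_apply]
          rw [real_inner_self_eq_norm_sq, hu1]; norm_num
        rw [h0] at h1; exact one_ne_zero h1.symm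
      have hW'rank : finrank ℝ W' ≤ n := by
        have := Submodule.finrank_lt_finrank_of_lt hW'lt
        omega
      have hclosed' : IsClosed ((⇑piu '' C₁) + (⇑piu '' C₂)) :=
        IH E W' hW'rank (⇑piu '' C₁) (⇑piu '' C₂)
          (by rintro _ ⟨z, hz, rfl⟩; exact hpiW z (hC1W hz))
          (by rintro _ ⟨z, hz, rfl⟩; exact hpiW z (hC2W hz))
          (hconv1.linear_image piu) (hconv2.linear_image piu)
          (hA1.image piu) (hA2.image piu)
      have hpicont : Continuous piu := piu.continuous_of_finiteDimensional
      have hmem : piu w ∈ (⇑piu '' C₁) + (⇑piu '' C₂) := by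
        apply hclosed'.mem_of_tendsto ((hpicont.tendsto w).comp hslim)
        apply Filter.Eventually.of_forall
        intro k
        refine ⟨piu (x k), ⟨x k, hx k, rfl⟩, piu (y k), ⟨y k, hy k, rfl⟩, ?_⟩
        show piu (x k) + piu (y k) = (⇑piu ∘ s) k
        rw [← map_add, hxy k]
        rfl
      rcases hmem with ⟨-, ⟨xb, hxb, rfl⟩, -, ⟨yb, hyb, rfl⟩, hsum⟩
      have hsum' : piu xb + piu yb = piu w := hsum
      -- xb + yb - w is a multiple of u
      have hker : piu (xb + yb - w) = 0 := by
        rw [map_sub, map_add, hsum', sub_self]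
      have hmul : xb + yb - w = (⟪u, xb + yb - w⟫) • u := by
        have h := hpiu_apply (xb + yb - w)
        rw [hker] at h
        exact sub_eq_zero.1 h.symm
      set r : ℝ := ⟪u, xb + yb - w⟫ with hr
      rcases le_or_gt r 0 with hneg | hpos
      · refine ⟨xb + (-r) • u, hrec1 xb hxb (-r) (by linarith), yb, hyb, ?_⟩
        have h2 : (xb + (-r) • u) + yb - w = 0 := by
          calc (xb + (-r) • u) + yb - w = (xb + yb - w) - r • u := by module
          _ = 0 := by rw [hmul]; exact sub_self _
        exact sub_eq_zero.1 h2
      · refine ⟨xb, hxb, yb + r • (-u), hrec2 yb hyb r (le_of_lt hpos), ?_⟩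
        have h2 : xb + (yb + r • (-u)) - w = 0 := by
          calc xb + (yb + r • (-u)) - w = (xb + yb - w) - r • u := by module
          _ = 0 := by rw [hmul]; exact sub_self _
        exact sub_eq_zero.1 h2

/-- Main theorem: minimum attained, by induction on dimension. -/
lemma min_attained : ∀ (n : ℕ) (E : Type) [NormedAddCommGroup E] [InnerProductSpace ℝ E]
    [FiniteDimensional ℝ E] (W : Submodule ℝ E), finrank ℝ W ≤ n →
    ∀ (H : Set E) (B : E →ₗ[ℝ] E →ₗ[ℝ] ℝ) (l : E →ₗ[ℝ] ℝ) (c : ℝ) (μ α₀ : ℝ),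
    H ⊆ (W : Set E) → AIC H → μ < α₀ →
    (∀ z ∈ H, μ ≤ B z z + l z + c) →
    (∀ α, μ < α → α ≤ α₀ → Convex ℝ {z ∈ H | B z z + l z + c ≤ α}) →
    (∀ α, μ < α → α ≤ α₀ → ∃ z ∈ H, B z z + l z + c ≤ α) →
    ∃ z ∈ H, B z z + l z + c ≤ μ := by
  intro n
  induction n with
  | zero =>
    intro E _ _ _ W hW H B l c μ α₀ hHW hAIC hμα hlb hconv hne
    have hbot : W = ⊥ := Submodule.finrank_eq_zero.1 (Nat.le_zero.1 hW)
    subst hbot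
    obtain ⟨z, hz, -⟩ := hne α₀ hμα le_rfl
    have hz0 : z = 0 := by simpa using hHW hz
    refine ⟨z, hz, ?_⟩
    by_contra hgt
    push_neg at hgt
    set α : ℝ := min α₀ ((μ + (B z z + l z + c)) / 2) with hα
    obtain ⟨z', hz', hfz'⟩ := hne α (lt_min hμα (by linarith)) (min_le_left _ _)
    have hz'0 : z' = 0 := by simpa using hHW hz'
    rw [hz'0, ← hz0] at hfz'
    have h2 : α ≤ (μ + (B z z + l z + c)) / 2 := min_le_right _ _
    linarith
  | succ n IH =>
    intro E _ _ _ W hW H B l c μ α₀ hHW hAIC hμα hlb hconv hne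
    set f : E → ℝ := fun z => B z z + l z + c with hf
    have hfc : Continuous f := quad_continuous B l c
    have hHclosed : IsClosed H := hAIC.isClosed
    set G : ℝ → Set E := fun α => {z ∈ H | f z ≤ α} with hG
    have hGclosed : ∀ α, IsClosed (G α) := by
      intro α
      have : G α = H ∩ f ⁻¹' (Set.Iic α) := by
        ext w; simp [hG, Set.mem_sep_iff]
      rw [this]
      exact hHclosed.inter (isClosed_Iic.preimage hfc)
    set a : ℕ → ℝ := fun k => μ + (α₀ - μ) * (1/2 : ℝ) ^ k with ha
    have ha0 : a 0 = α₀ := by simp [ha]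
    have hpowpos : ∀ k : ℕ, (0:ℝ) < (1/2 : ℝ) ^ k := fun k => by positivity
    have haμ : ∀ k, μ < a k := by
      intro k
      have := hpowpos k
      have h2 : (0:ℝ) < α₀ - μ := by linarith
      have := mul_pos h2 this
      simp only [ha]
      linarith
    have haα₀ : ∀ k, a k ≤ α₀ := by
      intro k
      have h1 : ((1:ℝ)/2) ^ k ≤ 1 := pow_le_one₀ (by norm_num) (by norm_num)
      have h2 : (0:ℝ) < α₀ - μ := by linarith
      have := mul_le_of_le_one_right (le_of_lt h2) h1
      simp only [ha]
      linarith
    have hanti : ∀ {j k : ℕ}, k ≤ j → a j ≤ a k := by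
      intro j k hkj
      have h1 : ((1:ℝ)/2) ^ j ≤ (1/2) ^ k :=
        pow_le_pow_of_le_one (by norm_num) (by norm_num) hkj
      have h2 : (0:ℝ) < α₀ - μ := by linarith
      simp only [ha]
      nlinarith
    have halim : Tendsto a atTop (𝓝 μ) := by
      have h1 : Tendsto (fun k : ℕ => ((1:ℝ)/2) ^ k) atTop (𝓝 0) :=
        tendsto_pow_atTop_nhds_zero_of_lt_one (by norm_num) (by norm_num)
      have h2 := (h1.const_mul (α₀ - μ)).const_add μ
      rw [ha]
      simpa using h2
    choose z hzH hzf using fun k => hne (a k) (haμ k) (haα₀ k)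
    have hzG : ∀ k, z k ∈ G (a k) := fun k => ⟨hzH k, hzf k⟩
    by_cases hbdd : ∃ R, ∀ k, ‖z k‖ ≤ R
    · -- bounded case: take a convergent subsequence
      rcases hbdd with ⟨R, hR⟩
      obtain ⟨zb, -, φ, hφ, hzlim⟩ := (isCompact_closedBall (0:E) R).tendsto_subseq
        (x := z) (fun k => by simpa [Metric.mem_closedBall, dist_eq_norm] using hR k)
      have hzbH : zb ∈ H :=
        hHclosed.mem_of_tendsto hzlim (Filter.Eventually.of_forall fun k => hzH (φ k))
      have hzbf : ∀ k, f zb ≤ a k := by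
        intro k
        have hmem : zb ∈ G (a k) := by
          apply (hGclosed (a k)).mem_of_tendsto hzlim
          rw [Filter.eventually_atTop]
          refine ⟨k, fun j hj => ?_⟩
          have h1 : k ≤ φ j := le_trans hj (hφ.le_apply)
          exact ⟨hzH (φ j), le_trans (hzf (φ j)) (hanti h1)⟩
        exact hmem.2
      exact ⟨zb, hzbH, ge_of_tendsto halim (Filter.Eventually.of_forall hzbf)⟩
    · -- unbounded case
      push_neg at hbdd
      obtain ⟨u, φ, hφmono, hu1, hnorm, hdir⟩ := exists_escape_dir z hbdd
      have hGrec : ∀ α, μ < α → α ≤ α₀ → ∀ w ∈ G α, ∀ t : ℝ, 0 ≤ t → w + t • u ∈ G α := by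
        intro α h1α h2α
        apply recession_of_escape (hGclosed α) (hconv α h1α h2α) ?_ hnorm hdir
        have hev : ∀ᶠ j in atTop, a j < α := halim.eventually_lt_const h1α
        have : ∀ᶠ k in atTop, a (φ k) < α := hφmono.tendsto_atTop.eventually hev
        filter_upwards [this] with k hk
        exact ⟨hzH (φ k), le_of_lt (lt_of_le_of_lt (hzf (φ k)) hk)⟩
      have key : ∀ w ∈ G α₀, B u u = 0 ∧ B w u + B u w + l u = 0 := by
        intro w hw
        apply poly_coeffs_zero (μ := μ) (α := α₀) (c₀ := B w w + l w + c)
        intro t ht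
        have hmem := hGrec α₀ hμα le_rfl w hw t ht
        have h1 : μ ≤ f (w + t • u) := hlb _ hmem.1
        have h2 : f (w + t • u) ≤ α₀ := hmem.2
        have hq := quad_expand B l c w u t
        simp only [hf] at h1 h2
        rw [hq] at h1 h2
        constructor <;> nlinarith [h1, h2]
      obtain ⟨z0, hz0⟩ : (G α₀).Nonempty := ⟨z 0, by rw [← ha0]; exact hzG 0⟩
      have hBuu : B u u = 0 := (key z0 hz0).1
      -- u belongs to W
      have hWclosed : IsClosed (W : Set E) := Submodule.closed_of_finiteDimensional W
      have huW : u ∈ W := by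
        have hm : ∀ k, ‖z (φ k)‖⁻¹ • z (φ k) ∈ (W : Set E) :=
          fun k => W.smul_mem _ (hHW (hzH (φ k)))
        exact hWclosed.mem_of_tendsto hdir (Filter.Eventually.of_forall hm)
      -- projection along u
      set feu : E →ₗ[ℝ] ℝ := (innerSL ℝ u).toLinearMap with hfeu
      set piu : E →ₗ[ℝ] E := LinearMap.id - feu.smulRight u with hpiu
      have hpiu_apply : ∀ w : E, piu w = w - (⟪u, w⟫) • u := fun w => rfl
      set W' : Submodule ℝ E := W ⊓ LinearMap.ker feu with hW'
      have hpiW : ∀ w ∈ W, piu w ∈ W' := by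
        intro w hwW
        refine ⟨W.sub_mem hwW (W.smul_mem _ huW), ?_⟩
        have : ⟪u, w - (⟪u, w⟫) • u⟫ = 0 := by
          rw [inner_sub_right, real_inner_smul_right, real_inner_self_eq_norm_sq, hu1]
          ring
        simpa [hfeu, LinearMap.mem_ker, hpiu_apply] using this
      have hW'lt : W' < W := by
        refine lt_of_le_of_ne inf_le_left ?_
        intro hcontra
        have hmem : u ∈ W' := hcontra ▸ huW
        have h0 : feu u = 0 := hmem.2
        have h1 : feu u = 1 := by
          simp only [hfeu, ContinuousLinearMap.coe_coe, innerSL_apply_apply]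
          rw [real_inner_self_eq_norm_sq, hu1]; norm_num
        rw [h0] at h1; exact one_ne_zero h1.symm
      have hW'rank : finrank ℝ W' ≤ n := by
        have := Submodule.finrank_lt_finrank_of_lt hW'lt
        omega
      -- the linear functional for the section
      set Lb : E →ₗ[ℝ] ℝ := B.flip u + B u with hLb
      have hLb_apply : ∀ w : E, Lb w = B w u + B u w := fun w => rfl
      set sec : Set E := {w | Lb w = -(l u)} with hsec
      have hGsec : ∀ α, μ < α → α ≤ α₀ → G α ⊆ H ∩ sec := by
        intro α h1α h2α w hw
        have hGsub : G α ⊆ G α₀ := fun v hv => ⟨hv.1, le_trans hv.2 h2α⟩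
        have hk := (key w (hGsub hw)).2
        refine ⟨hw.1, ?_⟩
        rw [Set.mem_setOf_eq, hLb_apply]
        linarith
      -- f is preserved by piu on the section (uses B u u = 0)
      have hfpi : ∀ w : E, w ∈ sec → f (piu w) = f w := by
        intro w hwsec
        have hq := quad_expand B l c w u (-(⟪u, w⟫))
        have hval : B w u + B u w + l u = 0 := by
          have := hwsec
          rw [Set.mem_setOf_eq, hLb_apply] at this
          linarith
        rw [hpiu_apply, sub_eq_add_neg, ← neg_smul]
        simp only [hf]
        rw [hq, hval, hBuu]
        ring
      set H' : Set E := ⇑piu '' (H ∩ sec) with hH'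
      have hAICH' : AIC H' := (hAIC.inter_hyperplane Lb (-(l u))).image piu
      have hlevel : ∀ α, μ < α → α ≤ α₀ → {p ∈ H' | f p ≤ α} = ⇑piu '' G α := by
        intro α h1α h2α
        ext p
        constructor
        · rintro ⟨⟨w, hwmem, rfl⟩, hfp⟩
          exact ⟨w, ⟨hwmem.1, by rw [← hfpi w hwmem.2]; exact hfp⟩, rfl⟩
        · rintro ⟨w, hwG, rfl⟩
          have hwsec := hGsec α h1α h2α hwG
          exact ⟨⟨w, hwsec, rfl⟩, by rw [hfpi w hwsec.2]; exact hwG.2⟩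
      have hres := IH E W' hW'rank H' B l c μ α₀
        (by rintro _ ⟨w, hwmem, rfl⟩; exact hpiW w (hHW hwmem.1))
        hAICH' hμα
        (by
          rintro _ ⟨w, hwmem, rfl⟩
          rw [show B (piu w) (piu w) + l (piu w) + c = f (piu w) from rfl, hfpi w hwmem.2]
          exact hlb w hwmem.1)
        (by
          intro α h1α h2α
          have : {p ∈ H' | B p p + l p + c ≤ α} = ⇑piu '' G α := hlevel α h1α h2α
          rw [this]
          exact (hconv α h1α h2α).linear_image piu)
        (by
          intro α h1α h2α
          obtain ⟨w, hwH, hwf⟩ := hne α h1α h2α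
          have hwG : w ∈ G α := ⟨hwH, hwf⟩
          have : piu w ∈ {p ∈ H' | f p ≤ α} := by
            rw [hlevel α h1α h2α]; exact ⟨w, hwG, rfl⟩
          exact ⟨piu w, this.1, this.2⟩)
      obtain ⟨p, hpH', hpμ⟩ := hres
      obtain ⟨w, hwmem, rfl⟩ := hpH'
      refine ⟨w, hwmem.1, ?_⟩
      have : f (piu w) ≤ μ := hpμ
      rw [hfpi w hwmem.2] at this
      exact this

lemma image_add_sets {E F : Type} [AddCommGroup E] [Module ℝ E] [AddCommGroup F] [Module ℝ F]
    (L : E →ₗ[ℝ] F) (A B : Set E) : ⇑L '' (A + B) = ⇑L '' A + ⇑L '' B := by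
  ext w
  constructor
  · rintro ⟨v, ⟨a, ha, b, hb, rfl⟩, rfl⟩
    exact ⟨L a, ⟨a, ha, rfl⟩, L b, ⟨b, hb, rfl⟩, (map_add L a b).symm⟩
  · rintro ⟨-, ⟨a, ha, rfl⟩, -, ⟨b, hb, rfl⟩, rfl⟩
    exact ⟨a + b, ⟨a, ha, b, hb, rfl⟩, map_add L a b⟩

/-- A qFW set is nonempty. -/
lemma qfw_nonempty {E : Type*} [AddCommGroup E] [Module ℝ E] {S : Set E} (h : IsQFWSet S) :
    S.Nonempty := by
  obtain ⟨x₀, hx₀, -⟩ := h.2 (fun _ => 0) ⟨0, 0, 0, by simp⟩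
    (fun α => by
      by_cases hα : (0:ℝ) ≤ α
      · have : {x ∈ S | (fun _ : E => (0:ℝ)) x ≤ α} = S := by ext x; simp [hα]
        rw [this]; exact h.1
      · have : {x ∈ S | (fun _ : E => (0:ℝ)) x ≤ α} = ∅ := by ext x; simp; intro _; linarith
        rw [this]; exact convex_empty)
    ⟨0, by rintro y ⟨x, hx, rfl⟩; exact le_rfl⟩
  exact ⟨x₀, hx₀⟩

/-- A qFW set has all linear images closed. -/
lemma qfw_AIC {E : Type} [NormedAddCommGroup E] [InnerProductSpace ℝ E]
    [FiniteDimensional ℝ E] {S : Set E} (h : IsQFWSet S) : AIC S := by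
  intro F _ _ _ L
  apply isClosed_of_closure_subset
  intro w hw
  set Bq : E →ₗ[ℝ] E →ₗ[ℝ] ℝ := LinearMap.mk₂ ℝ (fun x y => ⟪L x, L y⟫)
    (fun x x' y => by simp [inner_add_left])
    (fun r x y => by simp [inner_smul_left])
    (fun x y y' => by simp [inner_add_right])
    (fun r x y => by simp [inner_smul_right]) with hBq
  set lq : E →ₗ[ℝ] ℝ := (-2 : ℝ) • ((innerSL ℝ w).toLinearMap ∘ₗ L) with hlq
  have hfq : ∀ z, ‖L z - w‖ ^ 2 = Bq z z + lq z + ‖w‖ ^ 2 := by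
    intro z
    rw [norm_sub_sq_real]
    have h1 : Bq z z = ⟪L z, L z⟫ := rfl
    have h2 : lq z = -2 * ⟪w, L z⟫ := rfl
    rw [h1, h2, real_inner_self_eq_norm_sq, real_inner_comm]
    ring
  have hconvlev : ∀ α : ℝ, Convex ℝ {x ∈ S | ‖L x - w‖ ^ 2 ≤ α} := by
    intro α
    intro x hx y hy p q hp hq hpq
    refine ⟨h.1 hx.1 hy.1 hp hq hpq, ?_⟩
    have hnle : ‖L (p • x + q • y) - w‖ ≤ p * ‖L x - w‖ + q * ‖L y - w‖ := by
      have : L (p • x + q • y) - w = p • (L x - w) + q • (L y - w) := by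
        have key : p • (L x - w) + q • (L y - w) = (p • L x + q • L y) - (p + q) • w := by
          module
        rw [map_add, map_smul, map_smul, key, hpq, one_smul]
      rw [this]
      calc ‖p • (L x - w) + q • (L y - w)‖ ≤ ‖p • (L x - w)‖ + ‖q • (L y - w)‖ :=
            norm_add_le _ _
        _ = p * ‖L x - w‖ + q * ‖L y - w‖ := by
            rw [norm_smul, norm_smul, Real.norm_eq_abs, Real.norm_eq_abs,
              abs_of_nonneg hp, abs_of_nonneg hq]
    have hsq : ‖L (p • x + q • y) - w‖ ^ 2 ≤ (p * ‖L x - w‖ + q * ‖L y - w‖) ^ 2 := by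
      apply pow_le_pow_left₀ (norm_nonneg _) hnle
    refine le_trans hsq ?_
    set s := ‖L x - w‖
    set t := ‖L y - w‖
    have hs : 0 ≤ s := norm_nonneg _
    have ht : 0 ≤ t := norm_nonneg _
    have hs2 : s ^ 2 ≤ α := hx.2
    have ht2 : t ^ 2 ≤ α := hy.2
    have hq1 : q = 1 - p := by linarith
    subst hq1
    nlinarith [mul_nonneg (mul_nonneg hp hq) (sq_nonneg (s - t)),
      mul_nonneg hp (sub_nonneg.2 hs2), mul_nonneg hq (sub_nonneg.2 ht2)]
  obtain ⟨x₀, hx₀S, hx₀min⟩ := h.2 (fun z => ‖L z - w‖ ^ 2) ⟨Bq, lq, ‖w‖ ^ 2, hfq⟩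
    hconvlev ⟨0, by rintro y ⟨x, hx, rfl⟩; positivity⟩
  have hLx₀ : L x₀ = w := by
    by_contra hne
    have hpos : 0 < ‖L x₀ - w‖ := by
      rw [norm_pos_iff, sub_ne_zero]; exact hne
    obtain ⟨b, hbS, hbd⟩ := Metric.mem_closure_iff.1 hw (‖L x₀ - w‖) hpos
    obtain ⟨v, hvS, rfl⟩ := hbS
    have h1 : ‖L x₀ - w‖ ^ 2 ≤ ‖L v - w‖ ^ 2 := hx₀min v hvS
    have h2 : ‖L v - w‖ < ‖L x₀ - w‖ := by
      rw [← dist_eq_norm, dist_comm]; exact hbd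
    nlinarith [norm_nonneg (L v - w), norm_nonneg (L x₀ - w)]
  exact ⟨x₀, hx₀S, hLx₀⟩

section Product

variable {E₁ E₂ : Type}
  [NormedAddCommGroup E₁] [InnerProductSpace ℝ E₁] [FiniteDimensional ℝ E₁]
  [NormedAddCommGroup E₂] [InnerProductSpace ℝ E₂] [FiniteDimensional ℝ E₂]

lemma aic_prod (F₁ : Set E₁) (F₂ : Set E₂) (hc₁ : Convex ℝ F₁) (hc₂ : Convex ℝ F₂)
    (hA₁ : AIC F₁) (hA₂ : AIC F₂) :
    AIC {z : WithLp 2 (E₁ × E₂) |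
      (WithLp.linearEquiv 2 ℝ (E₁ × E₂) z).1 ∈ F₁ ∧ (WithLp.linearEquiv 2 ℝ (E₁ × E₂) z).2 ∈ F₂} := by
  set e := WithLp.linearEquiv 2 ℝ (E₁ × E₂) with he
  set i₁ : E₁ →ₗ[ℝ] WithLp 2 (E₁ × E₂) := e.symm.toLinearMap ∘ₗ LinearMap.inl ℝ E₁ E₂ with hi₁
  set i₂ : E₂ →ₗ[ℝ] WithLp 2 (E₁ × E₂) := e.symm.toLinearMap ∘ₗ LinearMap.inr ℝ E₁ E₂ with hi₂
  have hset : {z : WithLp 2 (E₁ × E₂) | (e z).1 ∈ F₁ ∧ (e z).2 ∈ F₂}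
      = ⇑i₁ '' F₁ + ⇑i₂ '' F₂ := by
    ext z
    constructor
    · rintro ⟨hz1, hz2⟩
      refine ⟨i₁ (e z).1, ⟨(e z).1, hz1, rfl⟩, i₂ (e z).2, ⟨(e z).2, hz2, rfl⟩, ?_⟩
      apply e.injective
      rw [map_add]
      show e (e.symm ((e z).1, 0)) + e (e.symm (0, (e z).2)) = e z
      rw [e.apply_symm_apply, e.apply_symm_apply]
      ext <;> simp
    · rintro ⟨-, ⟨x, hx, rfl⟩, -, ⟨y, hy, rfl⟩, rfl⟩
      have : e (i₁ x + i₂ y) = (x, y) := by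
        rw [map_add]
        show e (e.symm (x, 0)) + e (e.symm (0, y)) = (x, y)
        rw [e.apply_symm_apply, e.apply_symm_apply]
        ext <;> simp
      rw [Set.mem_setOf_eq, this]
      exact ⟨hx, hy⟩
  rw [hset]
  intro F _ _ _ L
  rw [image_add_sets]
  have h1 : ⇑L '' (⇑i₁ '' F₁) = ⇑(L ∘ₗ i₁) '' F₁ := by rw [Set.image_image]; rfl
  have h2 : ⇑L '' (⇑i₂ '' F₂) = ⇑(L ∘ₗ i₂) '' F₂ := by rw [Set.image_image]; rfl
  rw [h1, h2]
  exact sum_closed (finrank ℝ F) F ⊤ (by rw [finrank_top])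
    _ _ (fun _ _ => Submodule.mem_top) (fun _ _ => Submodule.mem_top)
    (hc₁.linear_image _) (hc₂.linear_image _)
    (hA₁.image _) (hA₂.image _)

end Product

end QFWProd

theorem qFW_prod {d₁ d₂ : ℕ}
    (F₁ : Set (EuclideanSpace ℝ (Fin d₁))) (F₂ : Set (EuclideanSpace ℝ (Fin d₂)))
    (h₁ : IsQFWSet F₁) (h₂ : IsQFWSet F₂) :
    IsQFWSet (F₁ ×ˢ F₂) := by
  constructor
  · exact h₁.1.prod h₂.1
  · rintro f ⟨B, l, c, hf⟩ hql hbdd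
    have hFne : (F₁ ×ˢ F₂).Nonempty := (QFWProd.qfw_nonempty h₁).prod (QFWProd.qfw_nonempty h₂)
    have himg : (f '' (F₁ ×ˢ F₂)).Nonempty := hFne.image f
    set μ := sInf (f '' (F₁ ×ˢ F₂)) with hμ
    set e := WithLp.linearEquiv 2 ℝ (EuclideanSpace ℝ (Fin d₁) × EuclideanSpace ℝ (Fin d₂))
      with he
    set H : Set (WithLp 2 (EuclideanSpace ℝ (Fin d₁) × EuclideanSpace ℝ (Fin d₂))) :=
      {z | (e z).1 ∈ F₁ ∧ (e z).2 ∈ F₂} with hH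
    have hAICH : QFWProd.AIC H := QFWProd.aic_prod F₁ F₂ h₁.1 h₂.1 (QFWProd.qfw_AIC h₁) (QFWProd.qfw_AIC h₂)
    set B' : WithLp 2 (EuclideanSpace ℝ (Fin d₁) × EuclideanSpace ℝ (Fin d₂)) →ₗ[ℝ]
        WithLp 2 (EuclideanSpace ℝ (Fin d₁) × EuclideanSpace ℝ (Fin d₂)) →ₗ[ℝ] ℝ :=
      LinearMap.mk₂ ℝ (fun z v => B (e z) (e v))
        (fun z z' v => by simp [map_add])
        (fun r z v => by simp [map_smul])
        (fun z v v' => by simp [map_add])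
        (fun r z v => by simp [map_smul]) with hB'
    set l' := l ∘ₗ e.toLinearMap with hl'
    have hf' : ∀ z, f (e z) = B' z z + l' z + c := fun z => hf (e z)
    have hres := QFWProd.min_attained
      (Module.finrank ℝ (WithLp 2 (EuclideanSpace ℝ (Fin d₁) × EuclideanSpace ℝ (Fin d₂))))
      (WithLp 2 (EuclideanSpace ℝ (Fin d₁) × EuclideanSpace ℝ (Fin d₂)))
      ⊤ (by rw [finrank_top]) H B' l' c μ (μ + 1)
      (fun _ _ => Submodule.mem_top) hAICH (by linarith)
      (fun z hz => by rw [← hf']; exact csInf_le hbdd ⟨e z, hz, rfl⟩)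
      (fun α h1α h2α => by
        have hseteq : {z ∈ H | B' z z + l' z + c ≤ α}
            = ⇑e.toLinearMap ⁻¹' {x ∈ F₁ ×ˢ F₂ | f x ≤ α} := by
          ext z
          simp only [Set.mem_sep_iff, Set.mem_preimage]
          rw [← hf']
          exact Iff.rfl
        rw [hseteq]
        exact (hql α).linear_preimage e.toLinearMap)
      (fun α h1α h2α => by
        obtain ⟨y, ⟨x, hxF, rfl⟩, hyα⟩ := exists_lt_of_csInf_lt himg h1α
        refine ⟨e.symm x, ?_, ?_⟩
        · show (e (e.symm x)).1 ∈ F₁ ∧ (e (e.symm x)).2 ∈ F₂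
          rw [e.apply_symm_apply]
          exact hxF
        · rw [← hf' (e.symm x), e.apply_symm_apply]
          exact le_of_lt hyα)
    obtain ⟨z₀, hz₀H, hz₀μ⟩ := hres
    refine ⟨e z₀, hz₀H, ?_⟩
    intro x hxF
    have hle : f (e z₀) ≤ μ := by rw [hf' z₀]; exact hz₀μ
    exact le_trans hle (csInf_le hbdd ⟨x, hxF, rfl⟩)
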